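/- Let W be a monotone sequentially complete vector lattice with a faithful positive linear functional ψ. If V is a monotone sequentially closed linear subspace of W and J ⊆ V is nonempty, upward directed, and bounded above in W, then the supremum of J in W lies in V and is also the supremum of J in V. -/
import Mathlib


/-- In a monotone sequentially complete vector lattice with a faithful positive
linear functional, if `V` is a monotone sequentially closed linear subspace and
`J ⊆ V` is nonempty, upward directed and bounded above in `W`, then the
supremum of `J` in `W` lies in `V` and is also the supremum of `J` in `V`. -/
theorem stmt_12 {W : Type*} [Lattice W] [AddCommGroup W] [Module ℝ W]
    [CovariantClass W W (· + ·) (· ≤ ·)] [PosSMulMono ℝ W]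
    (ψ : W →ₗ[ℝ] ℝ)
    (hψpos : ∀ a : W, 0 ≤ a → 0 ≤ ψ a)
    (hψfaith : ∀ a : W, 0 ≤ a → a ≠ 0 → 0 < ψ a)
    (hseq : ∀ f : ℕ → W, Monotone f → BddAbove (Set.range f) →
      ∃ s, IsLUB (Set.range f) s)
    (V : Submodule ℝ W)
    (hVclosed : ∀ f : ℕ → W, (∀ n, f n ∈ V) → Monotone f →
      BddAbove (Set.range f) → ∀ s : W, IsLUB (Set.range f) s → s ∈ V)
    (J : Set W) (hJV : J ⊆ V) (hJne : J.Nonempty)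
    (hJdir : DirectedOn (· ≤ ·) J) (hJbdd : BddAbove J) :
    ∃ s : W, IsLUB J s ∧ s ∈ V ∧
      ∀ v ∈ V, v ∈ upperBounds J → s ≤ v := by
  -- ψ is monotone
  have hmono : ∀ a b : W, a ≤ b → ψ a ≤ ψ b := by
    intro a b h
    have h0 := hψpos (b - a) (sub_nonneg.2 h)
    have : ψ (b - a) = ψ b - ψ a := map_sub ψ b a
    linarith
  obtain ⟨b, hb⟩ := hJbdd
  -- the image ψ '' J is nonempty and bounded above
  have hne' : (ψ '' J).Nonempty := hJne.image ψ
  have hbdd' : BddAbove (ψ '' J) := ⟨ψ b, by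
    rintro _ ⟨y, hy, rfl⟩; exact hmono _ _ (hb hy)⟩
  set α : ℝ := sSup (ψ '' J) with hα
  -- pick x n ∈ J with ψ (x n) > α - 1/(n+1)
  have hx : ∀ n : ℕ, ∃ y ∈ J, α - 1 / (n + 1) < ψ y := by
    intro n
    have hlt : α - 1 / (n + 1 : ℝ) < α := by
      have : (0:ℝ) < 1 / (n + 1) := by positivity
      linarith
    obtain ⟨r, hr, hr'⟩ := exists_lt_of_lt_csSup hne' hlt
    obtain ⟨y, hy, rfl⟩ := hr
    exact ⟨y, hy, hr'⟩
  choose x hxJ hxψ using hx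
  -- build an increasing sequence in J dominating x
  have step : ∀ (p : {w // w ∈ J}) (n : ℕ),
      ∃ q : {w // w ∈ J}, p.1 ≤ q.1 ∧ x n ≤ q.1 := by
    intro p n
    obtain ⟨z, hz, h1, h2⟩ := hJdir p.1 p.2 (x n) (hxJ n)
    exact ⟨⟨z, hz⟩, h1, h2⟩
  choose st hst1 hst2 using step
  set f' : ℕ → {w // w ∈ J} :=
    fun n => Nat.rec ⟨x 0, hxJ 0⟩ (fun k ih => st ih (k + 1)) n with hf'
  set f : ℕ → W := fun n => (f' n).1 with hf
  have hfJ : ∀ n, f n ∈ J := fun n => (f' n).2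
  have hfmono : Monotone f := by
    apply monotone_nat_of_le_succ
    intro n
    exact hst1 (f' n) (n + 1)
  have hfx : ∀ n, x n ≤ f n := by
    intro n
    cases n with
    | zero => exact le_refl _
    | succ k => exact hst2 (f' k) (k + 1)
  have hfbdd : BddAbove (Set.range f) := ⟨b, by
    rintro _ ⟨n, rfl⟩; exact hb (hfJ n)⟩
  obtain ⟨s, hs⟩ := hseq f hfmono hfbdd
  have hsV : s ∈ V := hVclosed f (fun n => hJV (hfJ n)) hfmono hfbdd s hs
  have hfs : ∀ n, f n ≤ s := fun n => hs.1 ⟨n, rfl⟩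
  -- s is an upper bound of J
  have hub : ∀ w ∈ J, w ≤ s := by
    intro w hw
    have key : ∀ n : ℕ, ψ ((w - s) ⊔ 0) ≤ 1 / (n + 1) := by
      intro n
      obtain ⟨y, hy, hy1, hy2⟩ := hJdir w hw (f n) (hfJ n)
      have h1 : w ⊔ f n ≤ y := sup_le hy1 hy2
      have h2 : ψ (w ⊔ f n) ≤ α := le_trans (hmono _ _ h1)
        (le_csSup hbdd' ⟨y, hy, rfl⟩)
      have h3 : (w - f n) ⊔ 0 = w ⊔ f n - f n := by
        rw [sup_sub, sub_self]
      have h4 : (w - s) ⊔ 0 ≤ (w - f n) ⊔ 0 :=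
        sup_le_sup_right (sub_le_sub_left (hfs n) w) 0
      have h5 : ψ ((w - s) ⊔ 0) ≤ ψ (w ⊔ f n) - ψ (f n) := by
        have := hmono _ _ h4
        rw [h3] at this
        rw [map_sub] at this
        linarith
      have h6 : α - 1 / (n + 1) < ψ (f n) :=
        lt_of_lt_of_le (hxψ n) (hmono _ _ (hfx n))
      linarith
    have hpos : 0 ≤ ψ ((w - s) ⊔ 0) := hψpos _ le_sup_right
    have hzero : ψ ((w - s) ⊔ 0) = 0 := by
      by_contra h
      have hlt : 0 < ψ ((w - s) ⊔ 0) := lt_of_le_of_ne hpos (Ne.symm h)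
      obtain ⟨n, hn⟩ := exists_nat_one_div_lt hlt
      exact absurd (key n) (not_le.2 hn)
    have : (w - s) ⊔ 0 = 0 := by
      by_contra h
      exact (hψfaith _ le_sup_right h).ne' hzero
    exact sub_nonpos.mp (sup_eq_right.mp this)
  have hsub : IsLUB J s := by
    constructor
    · exact hub
    · intro v hv
      exact hs.2 (by rintro _ ⟨n, rfl⟩; exact hv (hfJ n))
  exact ⟨s, hsub, hsV, fun v _ hv => hsub.2 hv⟩
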